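/- N is almost surely finite, and E[s^N] < ∞ for every real s ≥ 1 with s²(1 − 2pq) < 1; in particular N is stochastically dominated by twice a geometric random variable with success probability 2pq. -/

import Mathlib

open MeasureTheory ENNReal

lemma natCast_lt_sInf_image_iff' {S : Set ℕ} {n : ℕ} :
    (n : ℕ∞) < sInf ((fun k : ℕ => (k : ℕ∞)) '' S) ↔ ∀ m ∈ S, n < m := by
  constructor
  · intro h m hm
    have h2 : sInf ((fun k : ℕ => (k : ℕ∞)) '' S) ≤ (m : ℕ∞) := sInf_le ⟨m, hm, rfl⟩
    exact_mod_cast h.trans_le h2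
  · intro h
    have h2 : ((n + 1 : ℕ) : ℕ∞) ≤ sInf ((fun k : ℕ => (k : ℕ∞)) '' S) := by
      apply le_sInf
      rintro _ ⟨m, hm, rfl⟩
      show ((n + 1 : ℕ) : ℕ∞) ≤ (m : ℕ∞)
      exact_mod_cast h m hm
    exact lt_of_lt_of_le (by exact_mod_cast Nat.lt_succ_self n) h2

/-- Geometric domination claim in continuation of Example 1 (alternating renewal):
`(U_n)` i.i.d. uniform on `[0,1)`, `p, q > 0`, `p + q ≤ 1`,
`N = inf{n ≥ 1 : (U_{n−1} < p ∧ p ≤ U_n < p+q) ∨ (U_n < p ∧ p ≤ U_{n−1} < p+q)}`.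
Then `N` is a.s. finite, `E[s^N] < ∞` for every `s ≥ 1` with `s²(1−2pq) < 1`, and `N` is
stochastically dominated by twice a geometric random variable with success probability
`2pq`: `P(N > n) ≤ (1−2pq)^{⌊n/2⌋}`. -/
theorem stmt11 {Ω : Type*} [MeasurableSpace Ω] (P : Measure Ω) [IsProbabilityMeasure P]
    (U : ℕ → Ω → ℝ) (hUmeas : ∀ i, Measurable (U i))
    (hIndep : ProbabilityTheory.iIndepFun U P)
    (hUnif : ∀ i, Measure.map (U i) P = volume.restrict (Set.Ico (0 : ℝ) 1))
    (p q : ℝ) (hp : 0 < p) (hq : 0 < q) (hpq : p + q ≤ 1)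
    (N : Ω → ℕ∞)
    (hN : ∀ ω, N ω = sInf ((fun n : ℕ => (n : ℕ∞)) ''
      {n : ℕ | 1 ≤ n ∧
        ((U (n - 1) ω < p ∧ p ≤ U n ω ∧ U n ω < p + q) ∨
         (U n ω < p ∧ p ≤ U (n - 1) ω ∧ U (n - 1) ω < p + q))})) :
    P {ω | N ω = ⊤} = 0 ∧
    (∀ s : ℝ, 1 ≤ s → s ^ 2 * (1 - 2 * p * q) < 1 →
      ∫⁻ ω, (if N ω = ⊤ then (⊤ : ℝ≥0∞)
        else ENNReal.ofReal (s ^ (N ω).toNat)) ∂P < ⊤) ∧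
    (∀ n : ℕ, P {ω | (n : ℕ∞) < N ω} ≤ ENNReal.ofReal ((1 - 2 * p * q) ^ (n / 2))) := by
  classical
  have hhalf : 2 * p * q ≤ 1 / 2 := by nlinarith [sq_nonneg (p - q), sq_nonneg (p + q)]
  have hr0' : 0 < 1 - 2 * p * q := by linarith
  have hr0 : 0 ≤ 1 - 2 * p * q := hr0'.le
  have hr1 : 1 - 2 * p * q < 1 := by nlinarith
  set A : Set ℝ := Set.Iio p with hA_def
  set B : Set ℝ := Set.Ico p (p + q) with hB_def
  have hA : MeasurableSet A := measurableSet_Iio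
  have hB : MeasurableSet B := measurableSet_Ico
  set C : ℕ → Set Ω := fun m =>
    (U (m - 1) ⁻¹' A ∩ U m ⁻¹' B) ∪ (U m ⁻¹' A ∩ U (m - 1) ⁻¹' B) with hC_def
  have hCmeas : ∀ m, MeasurableSet (C m) := fun m =>
    (((hUmeas _) hA).inter ((hUmeas _) hB)).union (((hUmeas _) hA).inter ((hUmeas _) hB))
  have hCmem : ∀ m ω, ω ∈ C m ↔
      ((U (m - 1) ω < p ∧ p ≤ U m ω ∧ U m ω < p + q) ∨
       (U m ω < p ∧ p ≤ U (m - 1) ω ∧ U (m - 1) ω < p + q)) := by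
    intro m ω
    simp [hC_def, hA_def, hB_def, Set.mem_Ico, Set.mem_Iio, and_assoc]
  -- tail set identity
  have htail : ∀ n : ℕ, {ω | (n : ℕ∞) < N ω} = ⋂ m ∈ Finset.Icc 1 n, (C m)ᶜ := by
    intro n
    ext ω
    rw [Set.mem_setOf_eq, hN ω, natCast_lt_sInf_image_iff']
    simp only [Set.mem_iInter, Finset.mem_Icc, Set.mem_compl_iff, Set.mem_setOf_eq]
    constructor
    · intro h m hm hc
      have := h m ⟨hm.1, (hCmem m ω).1 hc⟩
      omega
    · intro h m hm
      by_contra hnm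
      exact h m ⟨hm.1, by omega⟩ ((hCmem m ω).2 hm.2)
  have hTmeas : ∀ n : ℕ, MeasurableSet {ω | (n : ℕ∞) < N ω} := by
    intro n
    rw [htail n]
    exact Finset.measurableSet_biInter _ fun m _ => (hCmeas m).compl
  -- measures of basic events
  have hPA : ∀ i, P (U i ⁻¹' A) = ENNReal.ofReal p := by
    intro i
    rw [← Measure.map_apply (hUmeas i) hA, hUnif i, Measure.restrict_apply hA]
    have : A ∩ Set.Ico (0 : ℝ) 1 = Set.Ico 0 p := by
      ext x
      simp only [hA_def, Set.mem_inter_iff, Set.mem_Iio, Set.mem_Ico]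
      constructor
      · rintro ⟨h1, h2, h3⟩; exact ⟨h2, h1⟩
      · rintro ⟨h1, h2⟩; exact ⟨h2, h1, by linarith⟩
    rw [this, Real.volume_Ico, sub_zero]
  have hPB : ∀ i, P (U i ⁻¹' B) = ENNReal.ofReal q := by
    intro i
    rw [← Measure.map_apply (hUmeas i) hB, hUnif i, Measure.restrict_apply hB]
    have : B ∩ Set.Ico (0 : ℝ) 1 = B := by
      apply Set.inter_eq_left.2
      intro x hx
      simp only [hB_def, Set.mem_Ico] at hx ⊢
      exact ⟨by linarith [hx.1], by linarith [hx.2]⟩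
    rw [this, hB_def, Real.volume_Ico]
    congr 1
    ring
  have hPC : ∀ m, 1 ≤ m → P (C m) = ENNReal.ofReal (2 * p * q) := by
    intro m hm
    have hne : m - 1 ≠ m := by omega
    have hind := hIndep.indepFun hne
    have h1 : P (U (m - 1) ⁻¹' A ∩ U m ⁻¹' B) = ENNReal.ofReal p * ENNReal.ofReal q := by
      rw [hind.measure_inter_preimage_eq_mul A B hA hB, hPA, hPB]
    have h2 : P (U m ⁻¹' A ∩ U (m - 1) ⁻¹' B) = ENNReal.ofReal q * ENNReal.ofReal p := by
      rw [Set.inter_comm, hind.measure_inter_preimage_eq_mul B A hB hA, hPA, hPB]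
    have hdisj : Disjoint (U (m - 1) ⁻¹' A ∩ U m ⁻¹' B) (U m ⁻¹' A ∩ U (m - 1) ⁻¹' B) := by
      rw [Set.disjoint_left]
      rintro ω ⟨-, hb⟩ ⟨ha, -⟩
      simp only [hA_def, hB_def, Set.mem_preimage, Set.mem_Iio, Set.mem_Ico] at ha hb
      linarith [hb.1]
    rw [hC_def]
    rw [measure_union hdisj (((hUmeas _) hA).inter ((hUmeas _) hB)), h1, h2,
      ← ENNReal.ofReal_mul hp.le, ← ENNReal.ofReal_mul hq.le,
      ← ENNReal.ofReal_add (by positivity) (by positivity)]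
    congr 1
    ring
  have hPCc : ∀ m, 1 ≤ m → P ((C m)ᶜ) = ENNReal.ofReal (1 - 2 * p * q) := by
    intro m hm
    rw [measure_compl (hCmeas m) (measure_ne_top _ _), hPC m hm, measure_univ,
      ← ENNReal.ofReal_one, ← ENNReal.ofReal_sub _ (by positivity)]
  set r : ℝ≥0∞ := ENNReal.ofReal (1 - 2 * p * q) with hr_def
  -- product formula
  have hprod : ∀ j : ℕ, P (⋂ k ∈ Finset.range j, (C (2 * k + 1))ᶜ) = r ^ j := by
    intro j
    induction j with
    | zero => simp
    | succ j ih =>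
      have hdisjST : Disjoint ({2 * j, 2 * j + 1} : Set ℕ) {i : ℕ | i < 2 * j} := by
        rw [Set.disjoint_left]
        intro a ha hb
        simp only [Set.mem_insert_iff, Set.mem_singleton_iff] at ha
        simp only [Set.mem_setOf_eq] at hb
        omega
      have hindep2 := ProbabilityTheory.indep_iSup_of_disjoint
        (m := fun i => MeasurableSpace.comap (U i) inferInstance)
        (fun i => (hUmeas i).comap_le) hIndep.iIndep hdisjST
      have hkey : ∀ (i : ℕ) (T : Set ℝ), MeasurableSet T → ∀ (S : Set ℕ), i ∈ S →
          MeasurableSet[⨆ i ∈ S, MeasurableSpace.comap (U i) inferInstance] (U i ⁻¹' T) := by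
        intro i T hT S hi
        have hle : MeasurableSpace.comap (U i) inferInstance ≤
            ⨆ i ∈ S, MeasurableSpace.comap (U i) inferInstance :=
          le_iSup₂ (f := fun (i : ℕ) (_ : i ∈ S) =>
            MeasurableSpace.comap (U i) inferInstance) i hi
        exact hle _ ⟨T, hT, rfl⟩
      have hmem1 : MeasurableSet[⨆ i ∈ ({2 * j, 2 * j + 1} : Set ℕ),
          MeasurableSpace.comap (U i) inferInstance] ((C (2 * j + 1))ᶜ) := by
        apply MeasurableSet.compl
        have e1 : 2 * j + 1 - 1 = 2 * j := by omega
        rw [hC_def]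
        simp only [e1]
        exact ((hkey (2 * j) A hA _ (by simp)).inter
            (hkey (2 * j + 1) B hB _ (by simp))).union
          ((hkey (2 * j + 1) A hA _ (by simp)).inter (hkey (2 * j) B hB _ (by simp)))
      have hmem2 : MeasurableSet[⨆ i ∈ {i : ℕ | i < 2 * j},
          MeasurableSpace.comap (U i) inferInstance]
          (⋂ k ∈ Finset.range j, (C (2 * k + 1))ᶜ) := by
        apply Finset.measurableSet_biInter
        intro k hk
        rw [Finset.mem_range] at hk
        apply MeasurableSet.compl
        have e1 : 2 * k + 1 - 1 = 2 * k := by omega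
        rw [hC_def]
        simp only [e1]
        exact ((hkey (2 * k) A hA _ (by simp only [Set.mem_setOf_eq]; omega)).inter
            (hkey (2 * k + 1) B hB _ (by simp only [Set.mem_setOf_eq]; omega))).union
          ((hkey (2 * k + 1) A hA _ (by simp only [Set.mem_setOf_eq]; omega)).inter
            (hkey (2 * k) B hB _ (by simp only [Set.mem_setOf_eq]; omega)))
      rw [Finset.range_add_one, Finset.set_biInter_insert,
        (ProbabilityTheory.Indep_iff _ _ _).1 hindep2 _ _ hmem1 hmem2, ih,
        hPCc _ (by omega)]
      rw [pow_succ, mul_comm]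
  -- part 3
  have part3 : ∀ n : ℕ, P {ω | (n : ℕ∞) < N ω} ≤
      ENNReal.ofReal ((1 - 2 * p * q) ^ (n / 2)) := by
    intro n
    rw [ENNReal.ofReal_pow hr0, ← hr_def, ← hprod (n / 2)]
    apply measure_mono
    rw [htail n]
    intro ω hω
    simp only [Set.mem_iInter, Finset.mem_Icc, Finset.mem_range, Set.mem_compl_iff] at hω ⊢
    intro k hk
    exact hω (2 * k + 1) ⟨by omega, by omega⟩
  -- part 1
  have hrlt : r < 1 := by
    rw [hr_def]
    exact ENNReal.ofReal_lt_one.2 hr1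
  have part1 : P {ω | N ω = ⊤} = 0 := by
    have hle : ∀ m : ℕ, P {ω | N ω = ⊤} ≤ r ^ m := by
      intro m
      calc P {ω | N ω = ⊤} ≤ P {ω | ((2 * m : ℕ) : ℕ∞) < N ω} := by
            apply measure_mono
            intro ω hω
            simp only [Set.mem_setOf_eq] at hω ⊢
            rw [hω]
            exact lt_top_iff_ne_top.2 (ENat.coe_ne_top _)
        _ ≤ ENNReal.ofReal ((1 - 2 * p * q) ^ ((2 * m) / 2)) := part3 _
        _ = r ^ m := by
            rw [ENNReal.ofReal_pow hr0, ← hr_def]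
            congr 1
            omega
    have := ge_of_tendsto' (ENNReal.tendsto_pow_atTop_nhds_zero_of_lt_one hrlt) hle
    exact le_antisymm this zero_le
  refine ⟨part1, ?_, part3⟩
  -- part 2
  intro s hs1 hs2
  have hs0 : (0 : ℝ) < s := lt_of_lt_of_le one_pos hs1
  set t : ℝ := s ^ 2 * (1 - 2 * p * q) with ht_def
  have ht0' : 0 < t := by positivity
  have ht1 : t < 1 := hs2
  set u : ℝ := Real.sqrt t with hu_def
  have hu0 : 0 < u := Real.sqrt_pos.2 ht0'
  have hu1 : u < 1 := by
    rw [hu_def, show (1 : ℝ) = Real.sqrt 1 by simp]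
    exact Real.sqrt_lt_sqrt ht0'.le ht1
  set y : ℝ≥0∞ := ENNReal.ofReal u with hy_def
  have hy0 : y ≠ 0 := by simp [hy_def, hu0]
  have hy1 : y < 1 := by rw [hy_def]; exact ENNReal.ofReal_lt_one.2 hu1
  have hyt : ENNReal.ofReal t = y ^ 2 := by
    rw [hy_def, ← ENNReal.ofReal_pow hu0.le, hu_def, Real.sq_sqrt ht0'.le]
  set g : Ω → ℝ≥0∞ := fun ω => 1 + ∑' n : ℕ,
    Set.indicator {ω' : Ω | (n : ℕ∞) < N ω'}
      (fun _ => ENNReal.ofReal ((s - 1) * s ^ n)) ω with hg_def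
  -- pointwise bound on the set where N is finite
  have hfg : ∀ ω, N ω ≠ ⊤ →
      (if N ω = ⊤ then (⊤ : ℝ≥0∞) else ENNReal.ofReal (s ^ (N ω).toNat)) ≤ g ω := by
    intro ω hω
    rw [if_neg hω]
    set m : ℕ := (N ω).toNat with hm_def
    have hNω : N ω = (m : ℕ∞) := (ENat.coe_toNat hω).symm
    have hind : ∀ n : ℕ, Set.indicator {ω' : Ω | (n : ℕ∞) < N ω'}
        (fun _ => ENNReal.ofReal ((s - 1) * s ^ n)) ω =
        if n < m then ENNReal.ofReal ((s - 1) * s ^ n) else 0 := by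
      intro n
      by_cases h : n < m
      · rw [if_pos h, Set.indicator_of_mem]
        show (n : ℕ∞) < N ω
        rw [hNω]
        exact_mod_cast h
      · rw [if_neg h, Set.indicator_of_notMem]
        show ¬(n : ℕ∞) < N ω
        rw [hNω]
        exact_mod_cast h
    have hsum : (∑' n : ℕ, Set.indicator {ω' : Ω | (n : ℕ∞) < N ω'}
        (fun _ => ENNReal.ofReal ((s - 1) * s ^ n)) ω) =
        ENNReal.ofReal (s ^ m - 1) := by
      rw [tsum_eq_sum (s := Finset.range m) (by
        intro n hn
        rw [hind n, if_neg (by simpa using hn)])]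
      rw [Finset.sum_congr rfl fun n hn => by
        rw [hind n, if_pos (Finset.mem_range.1 hn)]]
      rw [← ENNReal.ofReal_sum_of_nonneg (fun n _ => by
        have : (0 : ℝ) ≤ s ^ n := by positivity
        nlinarith)]
      congr 1
      rw [← Finset.mul_sum, mul_comm, geom_sum_mul]
    rw [hg_def]
    simp only []
    rw [hsum, ← ENNReal.ofReal_one,
      ← ENNReal.ofReal_add (by norm_num) (by nlinarith [one_le_pow₀ hs1 (n := m)])]
    apply le_of_eq
    congr 1
    ring
  have hae : ∀ᵐ ω ∂P, (if N ω = ⊤ then (⊤ : ℝ≥0∞)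
      else ENNReal.ofReal (s ^ (N ω).toNat)) ≤ g ω := by
    rw [MeasureTheory.ae_iff]
    apply measure_mono_null _ part1
    intro ω h
    simp only [Set.mem_setOf_eq] at h ⊢
    by_contra h'
    exact h (hfg ω h')
  have hint : (∫⁻ ω, (if N ω = ⊤ then (⊤ : ℝ≥0∞)
      else ENNReal.ofReal (s ^ (N ω).toNat)) ∂P) ≤ ∫⁻ ω, g ω ∂P :=
    lintegral_mono_ae hae
  have hg_int : (∫⁻ ω, g ω ∂P) = 1 + ∑' n : ℕ,
      ENNReal.ofReal ((s - 1) * s ^ n) * P {ω | (n : ℕ∞) < N ω} := by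
    rw [hg_def]
    rw [lintegral_add_left measurable_const]
    rw [lintegral_const, measure_univ, mul_one]
    congr 1
    rw [lintegral_tsum (fun n => (measurable_const.indicator (hTmeas n)).aemeasurable)]
    congr 1
    funext n
    rw [lintegral_indicator_const (hTmeas n)]
  -- bound the series
  have hterm : ∀ n : ℕ, ENNReal.ofReal ((s - 1) * s ^ n) * P {ω | (n : ℕ∞) < N ω} ≤
      (ENNReal.ofReal ((s - 1) * s) * y⁻¹) * y ^ n := by
    intro n
    have hsn0 : (0 : ℝ) ≤ (s - 1) * s ^ n := by
      have : (0 : ℝ) ≤ s ^ n := by positivity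
      nlinarith
    have hineq : (s - 1) * s ^ n * (1 - 2 * p * q) ^ (n / 2) ≤
        (s - 1) * s * t ^ (n / 2) := by
      have h1 : s ^ n ≤ s * (s ^ 2) ^ (n / 2) := by
        calc s ^ n ≤ s ^ (2 * (n / 2) + 1) := pow_le_pow_right₀ hs1 (by omega)
          _ = s * (s ^ 2) ^ (n / 2) := by rw [pow_succ, ← pow_mul, mul_comm (s ^ (2 * (n/2)))]
      have h2 : (s - 1) * s ^ n * (1 - 2 * p * q) ^ (n / 2) ≤
          (s - 1) * (s * (s ^ 2) ^ (n / 2)) * (1 - 2 * p * q) ^ (n / 2) := by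
        apply mul_le_mul_of_nonneg_right (mul_le_mul_of_nonneg_left h1 (by linarith))
        positivity
      calc (s - 1) * s ^ n * (1 - 2 * p * q) ^ (n / 2) ≤
          (s - 1) * (s * (s ^ 2) ^ (n / 2)) * (1 - 2 * p * q) ^ (n / 2) := h2
        _ = (s - 1) * s * t ^ (n / 2) := by rw [ht_def, mul_pow]; ring
    have hykey : y ^ (2 * (n / 2)) ≤ y⁻¹ * y ^ n := by
      have h2 : y ^ (2 * (n / 2) + 1) ≤ y ^ n :=
        pow_le_pow_of_le_one zero_le hy1.le (by omega)
      calc y ^ (2 * (n / 2)) = y⁻¹ * y ^ (2 * (n / 2) + 1) := by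
            rw [pow_succ', ← mul_assoc,
              ENNReal.inv_mul_cancel hy0 (hy1.trans one_lt_top).ne, one_mul]
        _ ≤ y⁻¹ * y ^ n := mul_le_mul_right h2 _
    calc ENNReal.ofReal ((s - 1) * s ^ n) * P {ω | (n : ℕ∞) < N ω} ≤
        ENNReal.ofReal ((s - 1) * s ^ n) * ENNReal.ofReal ((1 - 2 * p * q) ^ (n / 2)) :=
          mul_le_mul_right (part3 n) _
      _ = ENNReal.ofReal ((s - 1) * s ^ n * (1 - 2 * p * q) ^ (n / 2)) :=
          (ENNReal.ofReal_mul hsn0).symm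
      _ ≤ ENNReal.ofReal ((s - 1) * s * t ^ (n / 2)) := ENNReal.ofReal_le_ofReal hineq
      _ = ENNReal.ofReal ((s - 1) * s) * (ENNReal.ofReal t) ^ (n / 2) := by
          rw [ENNReal.ofReal_mul (by nlinarith), ENNReal.ofReal_pow ht0'.le]
      _ = ENNReal.ofReal ((s - 1) * s) * y ^ (2 * (n / 2)) := by rw [hyt, ← pow_mul]
      _ ≤ ENNReal.ofReal ((s - 1) * s) * (y⁻¹ * y ^ n) := mul_le_mul_right hykey _
      _ = (ENNReal.ofReal ((s - 1) * s) * y⁻¹) * y ^ n := by rw [mul_assoc]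
  have hsum_lt : (∑' n : ℕ, ENNReal.ofReal ((s - 1) * s ^ n) * P {ω | (n : ℕ∞) < N ω}) < ⊤ := by
    calc (∑' n : ℕ, ENNReal.ofReal ((s - 1) * s ^ n) * P {ω | (n : ℕ∞) < N ω}) ≤
        ∑' n : ℕ, (ENNReal.ofReal ((s - 1) * s) * y⁻¹) * y ^ n :=
          ENNReal.tsum_le_tsum hterm
      _ = (ENNReal.ofReal ((s - 1) * s) * y⁻¹) * (1 - y)⁻¹ := by
          rw [ENNReal.tsum_mul_left, ENNReal.tsum_geometric]
      _ < ⊤ := by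
          apply ENNReal.mul_lt_top
          · exact ENNReal.mul_lt_top ENNReal.ofReal_lt_top
              (ENNReal.inv_lt_top.2 (pos_iff_ne_zero.2 hy0))
          · exact ENNReal.inv_lt_top.2 (tsub_pos_of_lt hy1)
  calc (∫⁻ ω, (if N ω = ⊤ then (⊤ : ℝ≥0∞)
      else ENNReal.ofReal (s ^ (N ω).toNat)) ∂P) ≤ ∫⁻ ω, g ω ∂P := hint
    _ = 1 + ∑' n : ℕ, ENNReal.ofReal ((s - 1) * s ^ n) * P {ω | (n : ℕ∞) < N ω} := hg_int
    _ < ⊤ := ENNReal.add_lt_top.2 ⟨one_lt_top, hsum_lt⟩
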